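/- For every integer n ≥ 2, every spanner S ∈ X of the graph G_n, and every spanner Ŝ of G_n with Ŝ ∉ X, the value vector f(Ŝ) does not dominate the value vector f(S). -/

import Mathlib

namespace MSpPaper

open SimpleGraph

variable {V : Type*}

/-- Minimum total `c2`-weight of a walk from `u` to `v` using only edges in `F`
(the set of weights of such walks is a set of naturals; its infimum is `0` when no walk exists). -/
noncomputable def wdist (F : Set (Sym2 V)) (c2 : Sym2 V → ℕ) (u v : V) : ℕ :=
  sInf (Set.range fun p : (SimpleGraph.fromEdgeSet F).Walk u v => (p.edges.map c2).sum)

/-- `S` is a spanner of `G`: a subset of the edges such that the resulting subgraph is connected. -/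
def IsSpanner (G : SimpleGraph V) (S : Set (Sym2 V)) : Prop :=
  S ⊆ G.edgeSet ∧ (SimpleGraph.fromEdgeSet S).Connected

/-- First objective: total `c1`-cost of the spanner. -/
def f1 (c1 : Sym2 V → ℤ) (S : Finset (Sym2 V)) : ℤ := ∑ e ∈ S, c1 e

open scoped Classical in
/-- Second objective (stretch factor): maximum over pairs of distinct vertices of the
distance ratio `d^S(u,v)/d^E(u,v)` (junk value `0` if there is no pair of distinct vertices). -/
noncomputable def f2 [Fintype V] (E S : Set (Sym2 V)) (c2 : Sym2 V → ℕ) : ℚ :=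
  if h : ((Finset.univ : Finset (V × V)).filter fun p => p.1 ≠ p.2).Nonempty then
    ((Finset.univ : Finset (V × V)).filter fun p => p.1 ≠ p.2).sup' h
      (fun p => (wdist S c2 p.1 p.2 : ℚ) / (wdist E c2 p.1 p.2 : ℚ))
  else 0

/-- The value vector of a spanner. -/
noncomputable def valueVec [Fintype V] (G : SimpleGraph V) (c1 : Sym2 V → ℤ) (c2 : Sym2 V → ℕ)
    (S : Finset (Sym2 V)) : ℚ × ℚ :=
  ((f1 c1 S : ℚ), f2 G.edgeSet (↑S) c2)

/-- `y'` dominates `y`: componentwise `≤` and unequal. -/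
def Dominates (y' y : ℚ × ℚ) : Prop := y' ≤ y ∧ y' ≠ y

/-- The non-dominated set of an MSp instance. -/
def YN [Fintype V] (G : SimpleGraph V) (c1 : Sym2 V → ℤ) (c2 : Sym2 V → ℕ) : Set (ℚ × ℚ) :=
  {y | (∃ S : Finset (Sym2 V), IsSpanner G (↑S) ∧ valueVec G c1 c2 S = y) ∧
       ∀ S' : Finset (Sym2 V), IsSpanner G (↑S') → ¬ Dominates (valueVec G c1 c2 S') y}


/-! ### The family of instances `G_n` from Section 3 -/

/-- Vertices of `G_n`: for each `i`, the vertex `(i,0)` is `v_i`, `(i,1)` is `v_i'`,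
and `(i,2)` is `w_i`. -/
abbrev Vtx (n : ℕ) := Fin n × Fin 3

/-- The weights `(c1, c2)` of the (ordered) pair `a b` of vertices of `G_n`;
`(0, 0)` (in particular `c2 = 0`) marks non-edges. -/
def wtG (n : ℕ) (a b : Vtx n) : ℤ × ℕ :=
  if a.2 = 0 ∧ b.2 = 2 ∧ a.1 = b.1 then (2 ^ ((a.1 : ℕ) + 1), 2 ^ ((a.1 : ℕ) + 1))
  else if a.2 = 0 ∧ b.2 = 1 ∧ a.1 = b.1 then (0, 2 ^ ((a.1 : ℕ) + 1))
  else if a.2 = 1 ∧ b.2 = 2 ∧ a.1 = b.1 then (0, 2 ^ ((a.1 : ℕ) + 1))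
  else if a.2 = 2 ∧ b.2 = 0 ∧ (b.1 : ℕ) = (a.1 : ℕ) + 1 then (0, 1)
  else if a.2 = 0 ∧ b.2 = 2 ∧ (a.1 : ℕ) = 0 ∧ (b.1 : ℕ) = n - 1 then (2 ^ (n + 1), 1)
  else (0, 0)

/-- The cost function `c1` of `G_n`. -/
def c1G (n : ℕ) : Sym2 (Vtx n) → ℤ :=
  Sym2.lift ⟨fun a b => (wtG n a b).1 + (wtG n b a).1, fun _ _ => add_comm _ _⟩

/-- The length function `c2` of `G_n`. -/
def c2G (n : ℕ) : Sym2 (Vtx n) → ℕ :=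
  Sym2.lift ⟨fun a b => (wtG n a b).2 + (wtG n b a).2, fun _ _ => add_comm _ _⟩

/-- The edge set of `G_n`: exactly the pairs with positive length. -/
def EG (n : ℕ) : Set (Sym2 (Vtx n)) := {e | c2G n e ≠ 0}

/-- The graph `G_n`. -/
def Gn (n : ℕ) : SimpleGraph (Vtx n) := SimpleGraph.fromEdgeSet (EG n)

/-- The vertex `v_i`. -/
def vG (n : ℕ) (i : Fin n) : Vtx n := (i, 0)
/-- The vertex `v_i'`. -/
def pG (n : ℕ) (i : Fin n) : Vtx n := (i, 1)
/-- The vertex `w_i`. -/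
def wG (n : ℕ) (i : Fin n) : Vtx n := (i, 2)
/-- The vertex `s = v_1`. -/
def sG (n : ℕ) (hn : 0 < n) : Vtx n := (⟨0, hn⟩, 0)
/-- The vertex `t = w_n`. -/
def tG (n : ℕ) (hn : 0 < n) : Vtx n := (⟨n - 1, Nat.sub_lt hn one_pos⟩, 2)

/-- Membership in `X`: spanners of `G_n` containing every edge of zero `c1`-cost and
not containing the edge `{s, t}`. -/
def memX (n : ℕ) (hn : 0 < n) (S : Finset (Sym2 (Vtx n))) : Prop :=
  IsSpanner (Gn n) (↑S) ∧ (∀ e ∈ (Gn n).edgeSet, c1G n e = 0 → e ∈ S) ∧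
    s(sG n hn, tG n hn) ∉ S

set_option maxHeartbeats 1000000 in
lemma wt2_cases {n : ℕ} {x y : Vtx n} (h : (wtG n x y).2 ≠ 0) :
    (x.2 = 0 ∧ y.2 = 2 ∧ x.1 = y.1) ∨ (x.2 = 0 ∧ y.2 = 1 ∧ x.1 = y.1) ∨
    (x.2 = 1 ∧ y.2 = 2 ∧ x.1 = y.1) ∨ (x.2 = 2 ∧ y.2 = 0 ∧ (y.1 : ℕ) = (x.1 : ℕ) + 1) ∨
    (x.2 = 0 ∧ y.2 = 2 ∧ (x.1 : ℕ) = 0 ∧ (y.1 : ℕ) = n - 1) := by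
  unfold wtG at h
  split_ifs at h with h1 h2 h3 h4 h5
  · exact Or.inl h1
  · exact Or.inr (Or.inl h2)
  · exact Or.inr (Or.inr (Or.inl h3))
  · exact Or.inr (Or.inr (Or.inr (Or.inl h4)))
  · exact Or.inr (Or.inr (Or.inr (Or.inr h5)))
  · exact absurd rfl h

lemma wt_vw (n : ℕ) (i : Fin n) : wtG n (i,0) (i,2) = (2 ^ ((i:ℕ)+1), 2 ^ ((i:ℕ)+1)) := by
  simp [wtG]
lemma wt_wv (n : ℕ) (i : Fin n) : wtG n (i,2) (i,0) = (0, 0) := by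
  simp [wtG]
lemma wt_vp (n : ℕ) (i : Fin n) : wtG n (i,0) (i,1) = (0, 2 ^ ((i:ℕ)+1)) := by
  simp [wtG]
lemma wt_pv (n : ℕ) (i : Fin n) : wtG n (i,1) (i,0) = (0, 0) := by
  simp [wtG]
lemma wt_pw (n : ℕ) (i : Fin n) : wtG n (i,1) (i,2) = (0, 2 ^ ((i:ℕ)+1)) := by
  simp [wtG]
lemma wt_wp (n : ℕ) (i : Fin n) : wtG n (i,2) (i,1) = (0, 0) := by
  simp [wtG]
lemma wt_bridge (n : ℕ) (i j : Fin n) (hij : (j:ℕ) = (i:ℕ) + 1) :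
    wtG n (i,2) (j,0) = (0, 1) := by
  simp [wtG, hij]
lemma wt_bridge' (n : ℕ) (i j : Fin n) (hij : (j:ℕ) = (i:ℕ) + 1) :
    wtG n (j,0) (i,2) = (0, 0) := by
  have h1 : j ≠ i := by intro h; subst h; omega
  have h2 : (j:ℕ) ≠ 0 := by omega
  simp [wtG, h1, h2, Fin.ext_iff]
lemma wt_st (n : ℕ) (hn : 2 ≤ n) (i j : Fin n) (hi : (i:ℕ) = 0) (hj : (j:ℕ) = n - 1) :
    wtG n (i,0) (j,2) = (2 ^ (n+1), 1) := by
  have h1 : i ≠ j := by intro h; subst h; omega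
  simp [wtG, h1, hi, hj]
lemma wt_ts (n : ℕ) (hn : 2 ≤ n) (i j : Fin n) (hi : (i:ℕ) = 0) (hj : (j:ℕ) = n - 1) :
    wtG n (j,2) (i,0) = (0, 0) := by
  simp [wtG, hi, hj]

-- c2 / c1 values
lemma c2_eq (n : ℕ) (a b : Vtx n) : c2G n s(a,b) = (wtG n a b).2 + (wtG n b a).2 := rfl
lemma c1_eq (n : ℕ) (a b : Vtx n) : c1G n s(a,b) = (wtG n a b).1 + (wtG n b a).1 := rfl

lemma c2_vw (n : ℕ) (i : Fin n) : c2G n s((i,0),(i,2)) = 2 ^ ((i:ℕ)+1) := by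
  rw [c2_eq, wt_vw, wt_wv]; rfl
lemma c1_vw (n : ℕ) (i : Fin n) : c1G n s((i,0),(i,2)) = 2 ^ ((i:ℕ)+1) := by
  rw [c1_eq, wt_vw, wt_wv]; simp
lemma c2_vp (n : ℕ) (i : Fin n) : c2G n s((i,0),(i,1)) = 2 ^ ((i:ℕ)+1) := by
  rw [c2_eq, wt_vp, wt_pv]; rfl
lemma c1_vp (n : ℕ) (i : Fin n) : c1G n s((i,0),(i,1)) = 0 := by
  rw [c1_eq, wt_vp, wt_pv]; rfl
lemma c2_pw (n : ℕ) (i : Fin n) : c2G n s((i,1),(i,2)) = 2 ^ ((i:ℕ)+1) := by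
  rw [c2_eq, wt_pw, wt_wp]; rfl
lemma c1_pw (n : ℕ) (i : Fin n) : c1G n s((i,1),(i,2)) = 0 := by
  rw [c1_eq, wt_pw, wt_wp]; rfl
lemma c2_bridge (n : ℕ) (i j : Fin n) (hij : (j:ℕ) = (i:ℕ) + 1) :
    c2G n s((i,2),(j,0)) = 1 := by
  rw [c2_eq, wt_bridge n i j hij, wt_bridge' n i j hij]; rfl
lemma c1_bridge (n : ℕ) (i j : Fin n) (hij : (j:ℕ) = (i:ℕ) + 1) :
    c1G n s((i,2),(j,0)) = 0 := by
  rw [c1_eq, wt_bridge n i j hij, wt_bridge' n i j hij]; rfl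
lemma c2_st (n : ℕ) (hn : 2 ≤ n) (i j : Fin n) (hi : (i:ℕ) = 0) (hj : (j:ℕ) = n - 1) :
    c2G n s((i,0),(j,2)) = 1 := by
  rw [c2_eq, wt_st n hn i j hi hj, wt_ts n hn i j hi hj]; rfl
lemma c1_st (n : ℕ) (hn : 2 ≤ n) (i j : Fin n) (hi : (i:ℕ) = 0) (hj : (j:ℕ) = n - 1) :
    c1G n s((i,0),(j,2)) = 2 ^ (n+1) := by
  rw [c1_eq, wt_st n hn i j hi hj, wt_ts n hn i j hi hj]; simp

lemma wt1_nonneg (n : ℕ) (a b : Vtx n) : 0 ≤ (wtG n a b).1 := by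
  unfold wtG; split_ifs <;> positivity
lemma c1_nonneg (n : ℕ) (e : Sym2 (Vtx n)) : 0 ≤ c1G n e := by
  induction e using Sym2.ind with
  | _ a b => rw [c1_eq]; exact add_nonneg (wt1_nonneg n a b) (wt1_nonneg n b a)

-- edge membership
lemma mem_edgeSet_of (n : ℕ) (a b : Vtx n) (h2 : c2G n s(a,b) ≠ 0) (hne : a ≠ b) :
    s(a,b) ∈ (Gn n).edgeSet := by
  rw [Gn, edgeSet_fromEdgeSet]
  exact ⟨h2, by simp [hne]⟩

lemma vp_mem (n : ℕ) (i : Fin n) : s(((i,0) : Vtx n),(i,1)) ∈ (Gn n).edgeSet :=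
  mem_edgeSet_of n _ _ (by rw [c2_vp]; positivity) (by simp)
lemma pw_mem (n : ℕ) (i : Fin n) : s(((i,1) : Vtx n),(i,2)) ∈ (Gn n).edgeSet :=
  mem_edgeSet_of n _ _ (by rw [c2_pw]; positivity) (by simp)
lemma vw_mem (n : ℕ) (i : Fin n) : s(((i,0) : Vtx n),(i,2)) ∈ (Gn n).edgeSet :=
  mem_edgeSet_of n _ _ (by rw [c2_vw]; positivity) (by simp)
lemma bridge_mem (n : ℕ) (i j : Fin n) (hij : (j:ℕ) = (i:ℕ) + 1) :
    s(((i,2) : Vtx n),(j,0)) ∈ (Gn n).edgeSet :=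
  mem_edgeSet_of n _ _ (by rw [c2_bridge n i j hij]; omega)
    (by intro h; rw [Prod.ext_iff] at h; exact absurd h.2 (by simp))
lemma st_mem (n : ℕ) (hn : 2 ≤ n) (i j : Fin n) (hi : (i:ℕ) = 0) (hj : (j:ℕ) = n - 1) :
    s(((i,0) : Vtx n),(j,2)) ∈ (Gn n).edgeSet :=
  mem_edgeSet_of n _ _ (by rw [c2_st n hn i j hi hj]; omega) (by simp)
section Potential
variable {n : ℕ} (T : Finset (Sym2 (Vtx n)))

/-- crossing cost of gadget `i` in `T` -/
def crossN (i : ℕ) : ℕ :=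
  if h : i < n then
    (if s((((⟨i, h⟩ : Fin n), 0) : Vtx n), ((⟨i, h⟩ : Fin n), 2)) ∈ T then 2^(i+1) else 2^(i+2))
  else 0

def PP (m : ℕ) : ℕ := ∑ k ∈ Finset.range m, (crossN T k + 1)

def phi (x : Vtx n) : ℕ :=
  PP T (x.1 : ℕ) + (if x.2 = 0 then 0 else if x.2 = 1 then 2^((x.1:ℕ)+1) else crossN T (x.1:ℕ))

lemma cross_lb {i : ℕ} (h : i < n) : 2^(i+1) ≤ crossN T i := by
  rw [crossN, dif_pos h]; split_ifs
  · exact le_refl _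
  · exact Nat.pow_le_pow_right (by norm_num) (by omega)

lemma cross_ub (i : ℕ) : crossN T i ≤ 2^(i+2) := by
  rw [crossN]; split_ifs with h h2
  · exact Nat.pow_le_pow_right (by norm_num) (by omega)
  · exact le_refl _
  · positivity

lemma cross_of_mem {i : Fin n} (h : s((((i : Fin n), 0) : Vtx n), ((i : Fin n), 2)) ∈ T) :
    crossN T (i : ℕ) = 2^((i:ℕ)+1) := by
  rw [crossN, dif_pos i.isLt]
  rw [if_pos (by simpa [Fin.eta] using h)]

lemma phi_v (i : Fin n) : phi T ((i, 0) : Vtx n) = PP T (i:ℕ) := by simp [phi]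
lemma phi_p (i : Fin n) : phi T ((i, 1) : Vtx n) = PP T (i:ℕ) + 2^((i:ℕ)+1) := by simp [phi]
lemma phi_w (i : Fin n) : phi T ((i, 2) : Vtx n) = PP T (i:ℕ) + crossN T (i:ℕ) := by simp [phi]

lemma PP_succ (m : ℕ) : PP T (m+1) = PP T m + (crossN T m + 1) := Finset.sum_range_succ _ m

/-- the potential step inequality for one ordered shape -/
lemma phi_step {hn : 2 ≤ n}
    (hst : s((((⟨0, Nat.lt_of_lt_of_le two_pos hn⟩ : Fin n), 0) : Vtx n), ((⟨n-1, by omega⟩ : Fin n), 2)) ∉ T)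
    (x y : Vtx n) (hxy : s(x,y) ∈ T) (h2 : (wtG n x y).2 ≠ 0) :
    (phi T y : ℤ) ≤ phi T x + c2G n s(x,y) ∧ (phi T x : ℤ) ≤ phi T y + c2G n s(x,y) := by
  obtain ⟨i, a⟩ := x
  obtain ⟨j, b⟩ := y
  rcases wt2_cases h2 with ⟨ha, hb, hij⟩ | ⟨ha, hb, hij⟩ | ⟨ha, hb, hij⟩ | ⟨ha, hb, hij⟩ |
    ⟨ha, hb, hi0, hjn⟩
  · -- direct edge (i,0)-(i,2)
    simp only at ha hb hij
    subst ha; subst hb; subst hij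
    have hc := cross_of_mem T hxy
    rw [phi_v, phi_w, c2_vw, hc]
    push_cast
    constructor <;> linarith [pow_nonneg (by norm_num : (0:ℤ) ≤ 2) ((i:ℕ)+1)]
  · simp only at ha hb hij
    subst ha; subst hb; subst hij
    rw [phi_v, phi_p, c2_vp]
    push_cast
    constructor <;> linarith [pow_nonneg (by norm_num : (0:ℤ) ≤ 2) ((i:ℕ)+1)]
  · simp only at ha hb hij
    subst ha; subst hb; subst hij
    have h1 := cross_lb T (i.isLt)
    have h2 := cross_ub T (i : ℕ)
    have h3 : (2:ℕ)^((i:ℕ)+2) = 2 * 2^((i:ℕ)+1) := by ring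
    rw [phi_p, phi_w, c2_pw]
    have h4 : ((2:ℕ)^((i:ℕ)+2) : ℤ) = 2 * 2^((i:ℕ)+1) := by push_cast; ring
    push_cast at h1 h2 ⊢
    constructor <;> linarith
  · -- bridge (i,2)-(j,0)
    simp only at ha hb hij
    subst ha; subst hb
    rw [phi_w, phi_v, c2_bridge n i j hij, hij, PP_succ]
    push_cast
    constructor <;> linarith
  · -- the forbidden st edge
    simp only at ha hb hi0 hjn
    subst ha; subst hb
    exfalso
    apply hst
    have h1 : i = ⟨0, Nat.lt_of_lt_of_le two_pos hn⟩ := Fin.ext hi0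
    have h2 : j = ⟨n-1, by omega⟩ := Fin.ext hjn
    rw [h1, h2] at hxy
    exact hxy
end Potential
section Walks
variable {n : ℕ} {T : Finset (Sym2 (Vtx n))}

lemma c2_ne_zero_or {a b : Vtx n} (h : c2G n s(a,b) ≠ 0) :
    (wtG n a b).2 ≠ 0 ∨ (wtG n b a).2 ≠ 0 := by
  rw [c2_eq] at h; omega

lemma edge_step (hn : 2 ≤ n) (hT : (↑T : Set (Sym2 (Vtx n))) ⊆ EG n)
    (hst : s((((⟨0, Nat.lt_of_lt_of_le two_pos hn⟩ : Fin n), 0) : Vtx n), ((⟨n-1, by omega⟩ : Fin n), 2)) ∉ T)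
    (a b : Vtx n) (hab : s(a,b) ∈ T) :
    (phi T b : ℤ) ≤ phi T a + c2G n s(a,b) := by
  have hE : c2G n s(a,b) ≠ 0 := hT hab
  rcases c2_ne_zero_or hE with h | h
  · exact (phi_step (hn := hn) T hst a b hab h).1
  · have hab' : s(b,a) ∈ T := by rwa [Sym2.eq_swap]
    have := (phi_step (hn := hn) T hst b a hab' h).2
    rwa [Sym2.eq_swap] at this

lemma walk_pot (hn : 2 ≤ n) (hT : (↑T : Set (Sym2 (Vtx n))) ⊆ EG n)
    (hst : s((((⟨0, Nat.lt_of_lt_of_le two_pos hn⟩ : Fin n), 0) : Vtx n), ((⟨n-1, by omega⟩ : Fin n), 2)) ∉ T)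
    {u v : Vtx n} (p : (SimpleGraph.fromEdgeSet (↑T : Set (Sym2 (Vtx n)))).Walk u v) :
    (phi T v : ℤ) ≤ phi T u + ((p.edges.map (c2G n)).sum : ℤ) := by
  induction p with
  | nil => simp
  | @cons u b v h p ih =>
    have hmem : s(u, b) ∈ T := ((SimpleGraph.fromEdgeSet_adj _).mp h).1
    have h1 := edge_step hn hT hst u b hmem
    rw [SimpleGraph.Walk.edges_cons]
    simp only [List.map_cons, List.sum_cons]
    push_cast at ih ⊢
    linarith

lemma wdist_st_lb (hn : 2 ≤ n) (hT : (↑T : Set (Sym2 (Vtx n))) ⊆ EG n)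
    (hst : s((((⟨0, Nat.lt_of_lt_of_le two_pos hn⟩ : Fin n), 0) : Vtx n), ((⟨n-1, by omega⟩ : Fin n), 2)) ∉ T)
    (hconn : (SimpleGraph.fromEdgeSet (↑T : Set (Sym2 (Vtx n)))).Connected)
    (i j : Fin n) (hi : (i : ℕ) = 0) (hj : (j : ℕ) = n - 1) :
    ∑ k ∈ Finset.range n, crossN T k + (n-1) ≤
      wdist (↑T) (c2G n) ((i, 0) : Vtx n) ((j, 2) : Vtx n) := by
  obtain ⟨p⟩ := hconn.preconnected ((i, 0) : Vtx n) ((j, 2) : Vtx n)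
  have hne : (Set.range fun p : (SimpleGraph.fromEdgeSet (↑T : Set (Sym2 (Vtx n)))).Walk
      ((i, 0) : Vtx n) ((j, 2) : Vtx n) =>
      (p.edges.map (c2G n)).sum).Nonempty := ⟨_, ⟨p, rfl⟩⟩
  obtain ⟨q, hq⟩ := Nat.sInf_mem hne
  rw [wdist, ← hq]
  have hpot := walk_pot hn hT hst q
  have hphis : phi T ((i, 0) : Vtx n) = 0 := by
    rw [phi_v, hi]; simp [PP]
  have hphit : phi T ((j, 2) : Vtx n) =
      ∑ k ∈ Finset.range n, crossN T k + (n-1) := by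
    rw [phi_w, hj]
    have hm : n - 1 + 1 = n := by omega
    have hPP : PP T (n-1) = ∑ k ∈ Finset.range (n-1), crossN T k + (n-1) := by
      rw [PP, Finset.sum_add_distrib, Finset.sum_const, smul_eq_mul, mul_one, Finset.card_range]
    have h2 : ∑ k ∈ Finset.range n, crossN T k
        = ∑ k ∈ Finset.range (n-1), crossN T k + crossN T (n-1) := by
      rw [← Finset.sum_range_succ, hm]
    omega
  rw [hphis, hphit] at hpot
  show _ ≤ (List.map (c2G n) q.edges).sum
  omega

end Walks
/-- the direct edge of gadget `i` -/
def DirE (n : ℕ) (i : Fin n) : Sym2 (Vtx n) := s(((i,0) : Vtx n), ((i,2) : Vtx n))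

section F1
variable {n : ℕ}

lemma DirE_inj : Function.Injective (DirE n) := by
  intro i j h
  rw [DirE, DirE, Sym2.eq_iff] at h
  rcases h with ⟨h1, _⟩ | ⟨h1, _⟩ <;> rw [Prod.ext_iff] at h1
  · exact h1.1
  · exact absurd h1.2 (by simp)

lemma cross_of_not_mem {T : Finset (Sym2 (Vtx n))} {i : Fin n} (h : DirE n i ∉ T) :
    crossN T (i : ℕ) = 2^((i:ℕ)+2) := by
  rw [crossN, dif_pos i.isLt, if_neg (by simpa [DirE, Fin.eta] using h)]

lemma cross_of_mem' {T : Finset (Sym2 (Vtx n))} {i : Fin n} (h : DirE n i ∈ T) :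
    crossN T (i : ℕ) = 2^((i:ℕ)+1) := cross_of_mem T (by simpa [DirE] using h)

/-- ordered classification for c1 -/
lemma c1_classify_ord (hn : 2 ≤ n) (x y : Vtx n)
    (hne : s(x,y) ≠ s((((⟨0, Nat.lt_of_lt_of_le two_pos hn⟩ : Fin n), 0) : Vtx n), ((⟨n-1, by omega⟩ : Fin n), 2)))
    (h2 : (wtG n x y).2 ≠ 0) :
    (∃ i : Fin n, s(x,y) = DirE n i) ∨ c1G n s(x,y) = 0 := by
  obtain ⟨i, a⟩ := x
  obtain ⟨j, b⟩ := y
  rcases wt2_cases h2 with ⟨ha, hb, hij⟩ | ⟨ha, hb, hij⟩ | ⟨ha, hb, hij⟩ | ⟨ha, hb, hij⟩ |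
    ⟨ha, hb, hi0, hjn⟩
  · simp only at ha hb hij
    subst ha; subst hb; subst hij
    exact Or.inl ⟨i, rfl⟩
  · simp only at ha hb hij
    subst ha; subst hb; subst hij
    exact Or.inr (c1_vp n i)
  · simp only at ha hb hij
    subst ha; subst hb; subst hij
    exact Or.inr (c1_pw n i)
  · simp only at ha hb hij
    subst ha; subst hb
    exact Or.inr (c1_bridge n i j hij)
  · simp only at ha hb hi0 hjn
    subst ha; subst hb
    exfalso
    apply hne
    have h1 : i = ⟨0, Nat.lt_of_lt_of_le two_pos hn⟩ := Fin.ext hi0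
    have h2 : j = ⟨n-1, by omega⟩ := Fin.ext hjn
    rw [h1, h2]

lemma c1_classify (hn : 2 ≤ n) (e : Sym2 (Vtx n)) (hE : e ∈ EG n)
    (hne : e ≠ s((((⟨0, Nat.lt_of_lt_of_le two_pos hn⟩ : Fin n), 0) : Vtx n), ((⟨n-1, by omega⟩ : Fin n), 2))) :
    (∃ i : Fin n, e = DirE n i) ∨ c1G n e = 0 := by
  induction e using Sym2.ind with
  | _ x y =>
    have h2 : c2G n s(x,y) ≠ 0 := hE
    rcases c2_ne_zero_or h2 with h | h
    · exact c1_classify_ord hn x y hne h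
    · have hne' : s(y,x) ≠ s((((⟨0, Nat.lt_of_lt_of_le two_pos hn⟩ : Fin n), 0) : Vtx n),
          ((⟨n-1, by omega⟩ : Fin n), 2)) := by rwa [Sym2.eq_swap]
      have := c1_classify_ord hn y x hne' h
      rwa [Sym2.eq_swap] at this

open scoped Classical in
lemma f1_eq (hn : 2 ≤ n) (T : Finset (Sym2 (Vtx n))) (hT : (↑T : Set (Sym2 (Vtx n))) ⊆ EG n)
    (hst : s((((⟨0, Nat.lt_of_lt_of_le two_pos hn⟩ : Fin n), 0) : Vtx n), ((⟨n-1, by omega⟩ : Fin n), 2)) ∉ T) :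
    f1 (c1G n) T =
      ∑ i ∈ Finset.univ.filter (fun i : Fin n => DirE n i ∈ T), (2^((i:ℕ)+1) : ℤ) := by
  classical
  rw [f1]
  rw [← Finset.sum_filter_of_ne (p := fun e => ∃ i : Fin n, e = DirE n i)
    (by
      intro e he hc1
      rcases c1_classify hn e (hT he) (by rintro rfl; exact hst he) with h | h
      · exact h
      · exact absurd h hc1)]
  have himg : T.filter (fun e => ∃ i : Fin n, e = DirE n i)
      = (Finset.univ.filter (fun i : Fin n => DirE n i ∈ T)).image (DirE n) := by
    ext e
    simp only [Finset.mem_filter, Finset.mem_image, Finset.mem_univ, true_and]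
    constructor
    · rintro ⟨he, i, rfl⟩; exact ⟨i, he, rfl⟩
    · rintro ⟨i, hi, rfl⟩; exact ⟨hi, i, rfl⟩
  rw [himg, Finset.sum_image (fun a _ b _ h => DirE_inj h)]
  apply Finset.sum_congr rfl
  intro i _
  rw [DirE, c1_vw]

lemma geom_sum_int (n : ℕ) : ∑ k ∈ Finset.range n, (2:ℤ)^(k+1) = 2^(n+1) - 2 := by
  induction n with
  | zero => simp
  | succ m ih => rw [Finset.sum_range_succ, ih]; ring

end F1
section UB
open SimpleGraph
variable {n : ℕ} {S : Finset (Sym2 (Vtx n))}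

/-- cost of a walk -/
def wc {n : ℕ} {G : SimpleGraph (Vtx n)} {u v : Vtx n} (p : G.Walk u v) : ℕ :=
  (p.edges.map (c2G n)).sum

lemma wc_nil {G : SimpleGraph (Vtx n)} {u : Vtx n} : wc (SimpleGraph.Walk.nil : G.Walk u u) = 0 := rfl

lemma wc_cons {G : SimpleGraph (Vtx n)} {u b v : Vtx n} (h : G.Adj u b) (p : G.Walk b v) :
    wc (SimpleGraph.Walk.cons h p) = c2G n s(u,b) + wc p := by
  simp [wc]

lemma wc_append {G : SimpleGraph (Vtx n)} {u v w : Vtx n} (p : G.Walk u v) (q : G.Walk v w) :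
    wc (p.append q) = wc p + wc q := by
  simp [wc, SimpleGraph.Walk.edges_append]

lemma wc_reverse {G : SimpleGraph (Vtx n)} {u v : Vtx n} (p : G.Walk u v) :
    wc p.reverse = wc p := by
  simp [wc, SimpleGraph.Walk.edges_reverse, List.sum_reverse]

lemma wdist_le_wc {F : Set (Sym2 (Vtx n))} {u v : Vtx n}
    (p : (SimpleGraph.fromEdgeSet F).Walk u v) : wdist F (c2G n) u v ≤ wc p :=
  Nat.sInf_le ⟨p, rfl⟩

/-- zero-cost-edge closure hypothesis -/
def HZ (n : ℕ) (S : Finset (Sym2 (Vtx n))) : Prop :=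
  ∀ e ∈ (Gn n).edgeSet, c1G n e = 0 → e ∈ S

lemma adj_vp (hz : HZ n S) (i : Fin n) :
    (SimpleGraph.fromEdgeSet (↑S : Set (Sym2 (Vtx n)))).Adj (i,0) (i,1) := by
  rw [SimpleGraph.fromEdgeSet_adj]
  exact ⟨hz _ (vp_mem n i) (c1_vp n i), by simp⟩

lemma adj_pw (hz : HZ n S) (i : Fin n) :
    (SimpleGraph.fromEdgeSet (↑S : Set (Sym2 (Vtx n)))).Adj (i,1) (i,2) := by
  rw [SimpleGraph.fromEdgeSet_adj]
  exact ⟨hz _ (pw_mem n i) (c1_pw n i), by simp⟩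

lemma adj_bridge (hz : HZ n S) (i j : Fin n) (hij : (j:ℕ) = (i:ℕ) + 1) :
    (SimpleGraph.fromEdgeSet (↑S : Set (Sym2 (Vtx n)))).Adj (i,2) (j,0) := by
  rw [SimpleGraph.fromEdgeSet_adj]
  refine ⟨hz _ (bridge_mem n i j hij) (c1_bridge n i j hij), ?_⟩
  intro h; rw [Prod.ext_iff] at h; exact absurd h.2 (by simp)

lemma adj_dir (hd : DirE n i ∈ S) :
    (SimpleGraph.fromEdgeSet (↑S : Set (Sym2 (Vtx n)))).Adj (i,0) (i,2) := by
  rw [SimpleGraph.fromEdgeSet_adj]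
  exact ⟨hd, by simp⟩

lemma exists_cross (hz : HZ n S) (i : Fin n) :
    ∃ p : (SimpleGraph.fromEdgeSet (↑S : Set (Sym2 (Vtx n)))).Walk (i,0) (i,2),
      wc p = crossN S (i:ℕ) := by
  by_cases hd : DirE n i ∈ S
  · refine ⟨SimpleGraph.Walk.cons (adj_dir hd) SimpleGraph.Walk.nil, ?_⟩
    rw [wc_cons, wc_nil, c2_vw, cross_of_mem' hd]
    ring
  · refine ⟨SimpleGraph.Walk.cons (adj_vp hz i) (SimpleGraph.Walk.cons (adj_pw hz i)
      SimpleGraph.Walk.nil), ?_⟩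
    rw [wc_cons, wc_cons, wc_nil, c2_vp, c2_pw, cross_of_not_mem hd]
    ring

lemma exists_spine (hz : HZ n S) (i : ℕ) (hi : i < n) :
    ∀ (j : ℕ) (hij : i ≤ j) (hj : j < n),
    ∃ p : (SimpleGraph.fromEdgeSet (↑S : Set (Sym2 (Vtx n)))).Walk
        ((⟨i,hi⟩ : Fin n), 2) ((⟨j,hj⟩ : Fin n), 2),
      wc p = ∑ k ∈ Finset.Ico (i+1) (j+1), (crossN S k + 1) := by
  intro j hij
  induction j, hij using Nat.le_induction with
  | base =>
    intro hj
    exact ⟨SimpleGraph.Walk.nil, by simp [wc_nil]⟩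
  | succ j hij ih =>
    intro hj
    obtain ⟨p, hp⟩ := ih (by omega)
    have hbr := adj_bridge hz (⟨j, by omega⟩ : Fin n) (⟨j+1, hj⟩ : Fin n) (by simp)
    obtain ⟨q, hq⟩ := exists_cross hz (⟨j+1, hj⟩ : Fin n)
    refine ⟨p.append (SimpleGraph.Walk.cons hbr q), ?_⟩
    rw [wc_append, wc_cons, hp, hq, c2_bridge n _ _ (by simp)]
    conv_rhs => rw [Finset.sum_Ico_succ_top (show i+1 ≤ j+1 by omega)]
    simp only [Fin.val_mk]
    omega

/-- the diameter bound -/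
lemma exists_walk_le_aux (hn : 2 ≤ n) (hz : HZ n S) (i j : Fin n) (hij : (i:ℕ) ≤ (j:ℕ))
    (a b : Fin 3) :
    ∃ p : (SimpleGraph.fromEdgeSet (↑S : Set (Sym2 (Vtx n)))).Walk (i,a) (j,b),
      wc p ≤ ∑ k ∈ Finset.range n, crossN S k + (n-1) := by
  have hone : ∀ k : Fin n, crossN S (k:ℕ) ≤ ∑ m ∈ Finset.range n, crossN S m := fun k =>
    Finset.single_le_sum (fun _ _ => Nat.zero_le _) (Finset.mem_range.mpr k.isLt)
  have hlb : ∀ k : Fin n, 2^((k:ℕ)+1) ≤ crossN S (k:ℕ) := fun k => cross_lb S k.isLt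
  rcases Nat.eq_or_lt_of_le hij with heq | hlt
  · -- same gadget
    have : i = j := Fin.ext heq
    subst this
    obtain ⟨pc, hpc⟩ := exists_cross hz i
    fin_cases a <;> fin_cases b <;> simp only [Fin.isValue, Fin.zero_eta, Fin.mk_one, show (⟨2, by norm_num⟩ : Fin 3) = 2 from rfl]
    · exact ⟨SimpleGraph.Walk.nil, by simp [wc_nil]⟩
    · refine ⟨SimpleGraph.Walk.cons (adj_vp hz i) SimpleGraph.Walk.nil, ?_⟩
      rw [wc_cons, wc_nil, c2_vp]
      have := hlb i; have := hone i; omega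
    · refine ⟨pc, ?_⟩
      rw [hpc]; have := hone i; omega
    · refine ⟨(SimpleGraph.Walk.cons (adj_vp hz i) SimpleGraph.Walk.nil).reverse, ?_⟩
      rw [wc_reverse, wc_cons, wc_nil, c2_vp]
      have := hlb i; have := hone i; omega
    · exact ⟨SimpleGraph.Walk.nil, by simp [wc_nil]⟩
    · refine ⟨SimpleGraph.Walk.cons (adj_pw hz i) SimpleGraph.Walk.nil, ?_⟩
      rw [wc_cons, wc_nil, c2_pw]
      have := hlb i; have := hone i; omega
    · refine ⟨pc.reverse, ?_⟩
      rw [wc_reverse, hpc]; have := hone i; omega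
    · refine ⟨(SimpleGraph.Walk.cons (adj_pw hz i) SimpleGraph.Walk.nil).reverse, ?_⟩
      rw [wc_reverse, wc_cons, wc_nil, c2_pw]
      have := hlb i; have := hone i; omega
    · exact ⟨SimpleGraph.Walk.nil, by simp [wc_nil]⟩
  · -- i < j
    obtain ⟨pci, hpci⟩ := exists_cross hz i
    obtain ⟨pcj, hpcj⟩ := exists_cross hz j
    -- entry from (i,a) to (i,2)
    have hentry : ∃ q : (SimpleGraph.fromEdgeSet (↑S : Set (Sym2 (Vtx n)))).Walk (i,a) (i,2),
        wc q ≤ crossN S (i:ℕ) := by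
      fin_cases a <;> simp only [Fin.isValue, Fin.zero_eta, Fin.mk_one, show (⟨2, by norm_num⟩ : Fin 3) = 2 from rfl]
      · exact ⟨pci, le_of_eq hpci⟩
      · refine ⟨SimpleGraph.Walk.cons (adj_pw hz i) SimpleGraph.Walk.nil, ?_⟩
        rw [wc_cons, wc_nil, c2_pw]; have := hlb i; omega
      · exact ⟨SimpleGraph.Walk.nil, by simp [wc_nil]⟩
    obtain ⟨q1, hq1⟩ := hentry
    -- exit from (j,0) to (j,b)
    have hexit : ∃ q : (SimpleGraph.fromEdgeSet (↑S : Set (Sym2 (Vtx n)))).Walk (j,0) (j,b),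
        wc q ≤ crossN S (j:ℕ) := by
      fin_cases b <;> simp only [Fin.isValue, Fin.zero_eta, Fin.mk_one, show (⟨2, by norm_num⟩ : Fin 3) = 2 from rfl]
      · exact ⟨SimpleGraph.Walk.nil, by simp [wc_nil]⟩
      · refine ⟨SimpleGraph.Walk.cons (adj_vp hz j) SimpleGraph.Walk.nil, ?_⟩
        rw [wc_cons, wc_nil, c2_vp]; have := hlb j; omega
      · exact ⟨pcj, le_of_eq hpcj⟩
    obtain ⟨q3, hq3⟩ := hexit
    -- spine from (i,2) to (j-1,2)
    obtain ⟨p2, hp2⟩ := exists_spine hz (i:ℕ) i.isLt ((j:ℕ)-1) (by omega) (by omega)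
    have hbr := adj_bridge hz (⟨(j:ℕ)-1, by omega⟩ : Fin n) j (by simp; omega)
    refine ⟨(q1.append (p2.append (SimpleGraph.Walk.cons hbr q3))), ?_⟩
    rw [wc_append, wc_append, wc_cons, c2_bridge n _ _ (by simp; omega), hp2]
    have hj1 : (j:ℕ) - 1 + 1 = (j:ℕ) := by omega
    rw [hj1]
    -- arithmetic
    have hsum : ∑ k ∈ Finset.Ico ((i:ℕ)+1) (j:ℕ), (crossN S k + 1)
        = ∑ k ∈ Finset.Ico ((i:ℕ)+1) (j:ℕ), crossN S k + ((j:ℕ) - ((i:ℕ)+1)) := by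
      rw [Finset.sum_add_distrib, Finset.sum_const, smul_eq_mul, mul_one, Nat.card_Ico]
    have hsplit1 : ∑ k ∈ Finset.Ico 0 (j:ℕ), crossN S k
        = ∑ k ∈ Finset.Ico 0 ((i:ℕ)+1), crossN S k + ∑ k ∈ Finset.Ico ((i:ℕ)+1) (j:ℕ), crossN S k :=
      (Finset.sum_Ico_consecutive _ (by omega) (by omega)).symm
    have hsplit2 : ∑ k ∈ Finset.Ico 0 n, crossN S k
        = ∑ k ∈ Finset.Ico 0 (j:ℕ), crossN S k + ∑ k ∈ Finset.Ico (j:ℕ) n, crossN S k :=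
      (Finset.sum_Ico_consecutive _ (by omega) (by omega)).symm
    have hA : ∑ k ∈ Finset.Ico 0 n, crossN S k = ∑ k ∈ Finset.range n, crossN S k := by
      rw [Finset.range_eq_Ico]
    have hci : crossN S (i:ℕ) ≤ ∑ k ∈ Finset.Ico 0 ((i:ℕ)+1), crossN S k :=
      Finset.single_le_sum (fun _ _ => Nat.zero_le _) (Finset.mem_Ico.mpr ⟨by omega, by omega⟩)
    have hcj : crossN S (j:ℕ) ≤ ∑ k ∈ Finset.Ico (j:ℕ) n, crossN S k :=
      Finset.single_le_sum (fun _ _ => Nat.zero_le _) (Finset.mem_Ico.mpr ⟨by omega, j.isLt⟩)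
    have hjn : (j:ℕ) < n := j.isLt
    omega

lemma exists_walk_le (hn : 2 ≤ n) (hz : HZ n S) (u v : Vtx n) :
    ∃ p : (SimpleGraph.fromEdgeSet (↑S : Set (Sym2 (Vtx n)))).Walk u v,
      wc p ≤ ∑ k ∈ Finset.range n, crossN S k + (n-1) := by
  obtain ⟨i, a⟩ := u
  obtain ⟨j, b⟩ := v
  rcases le_total (i:ℕ) (j:ℕ) with h | h
  · exact exists_walk_le_aux hn hz i j h a b
  · obtain ⟨p, hp⟩ := exists_walk_le_aux hn hz j i h b a
    exact ⟨p.reverse, by rwa [wc_reverse]⟩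

lemma wdist_le_Dst (hn : 2 ≤ n) (hz : HZ n S) (u v : Vtx n) :
    wdist (↑S) (c2G n) u v ≤ ∑ k ∈ Finset.range n, crossN S k + (n-1) := by
  obtain ⟨p, hp⟩ := exists_walk_le hn hz u v
  exact le_trans (wdist_le_wc p) hp

end UB
section Final
open SimpleGraph
variable {n : ℕ}

lemma edgeSet_subset_EG : (Gn n).edgeSet ⊆ EG n := by
  rw [Gn, SimpleGraph.edgeSet_fromEdgeSet]
  exact Set.diff_subset

lemma one_le_wc {F : Set (Sym2 (Vtx n))} (hF : F ⊆ EG n) {u v : Vtx n} (huv : u ≠ v)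
    (q : (SimpleGraph.fromEdgeSet F).Walk u v) : 1 ≤ wc q := by
  cases q with
  | nil => exact absurd rfl huv
  | cons h p =>
    rename_i b
    rw [wc_cons]
    have h1 : s(u, b) ∈ F := ((SimpleGraph.fromEdgeSet_adj _).mp h).1
    have h2 : c2G n s(u, b) ≠ 0 := hF h1
    omega

lemma wdist_E_st (hn : 2 ≤ n) (i j : Fin n) (hi : (i:ℕ) = 0) (hj : (j:ℕ) = n-1) :
    wdist (Gn n).edgeSet (c2G n) ((i,0) : Vtx n) ((j,2) : Vtx n) = 1 := by
  have hadj : (SimpleGraph.fromEdgeSet (Gn n).edgeSet).Adj ((i,0) : Vtx n) ((j,2) : Vtx n) := by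
    rw [SimpleGraph.fromEdgeSet_adj]
    exact ⟨st_mem n hn i j hi hj, by simp⟩
  have hle : wdist (Gn n).edgeSet (c2G n) ((i,0) : Vtx n) ((j,2) : Vtx n) ≤ 1 := by
    have h := wdist_le_wc (SimpleGraph.Walk.cons hadj SimpleGraph.Walk.nil)
    rwa [wc_cons, wc_nil, c2_st n hn i j hi hj] at h
  have hne : (Set.range fun p : (SimpleGraph.fromEdgeSet (Gn n).edgeSet).Walk
      ((i,0) : Vtx n) ((j,2) : Vtx n) => (p.edges.map (c2G n)).sum).Nonempty :=
    ⟨_, ⟨SimpleGraph.Walk.cons hadj SimpleGraph.Walk.nil, rfl⟩⟩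
  obtain ⟨q, hq⟩ := Nat.sInf_mem hne
  have hge : 1 ≤ wdist (Gn n).edgeSet (c2G n) ((i,0) : Vtx n) ((j,2) : Vtx n) := by
    rw [wdist, ← hq]
    exact one_le_wc edgeSet_subset_EG (by simp) q
  omega

lemma pair_st_ne (i j : Fin n) : ((i,0) : Vtx n) ≠ ((j,2) : Vtx n) := by
  intro h; rw [Prod.ext_iff] at h; exact absurd h.2 (by simp)

lemma f2_ge (hn : 2 ≤ n) (T : Finset (Sym2 (Vtx n))) (i j : Fin n)
    (hi : (i:ℕ) = 0) (hj : (j:ℕ) = n-1) :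
    (wdist (↑T) (c2G n) ((i,0) : Vtx n) ((j,2) : Vtx n) : ℚ) ≤
      f2 (Gn n).edgeSet (↑T) (c2G n) := by
  unfold f2
  split_ifs with h
  · refine le_trans (le_of_eq ?_) (Finset.le_sup' (f := fun p : Vtx n × Vtx n =>
      (wdist (↑T) (c2G n) p.1 p.2 : ℚ) / (wdist (Gn n).edgeSet (c2G n) p.1 p.2 : ℚ))
      (b := ((((i,0) : Vtx n), ((j,2) : Vtx n)) : Vtx n × Vtx n)) ?_)
    · simp [wdist_E_st hn i j hi hj]
    · simp only [Finset.mem_filter]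
      exact ⟨Finset.mem_univ _, pair_st_ne i j⟩
  · exfalso
    apply h
    refine ⟨((((⟨0, Nat.lt_of_lt_of_le two_pos hn⟩ : Fin n), 0) : Vtx n), (((⟨0, Nat.lt_of_lt_of_le two_pos hn⟩ : Fin n), 2) : Vtx n)), ?_⟩
    simp only [Finset.mem_filter]
    exact ⟨Finset.mem_univ _, pair_st_ne _ _⟩

lemma f2_le_all (T : Finset (Sym2 (Vtx n))) (B : ℚ) (hB : 0 ≤ B)
    (h : ∀ u v : Vtx n, (wdist (↑T) (c2G n) u v : ℚ) ≤ B) :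
    f2 (Gn n).edgeSet (↑T) (c2G n) ≤ B := by
  classical
  unfold f2
  split_ifs with h'
  · apply Finset.sup'_le
    intro p _
    rcases Nat.eq_zero_or_pos (wdist (Gn n).edgeSet (c2G n) p.1 p.2) with h0 | h1
    · rw [h0]; simpa using hB
    · rw [div_le_iff₀ (by exact_mod_cast h1)]
      calc (wdist (↑T) (c2G n) p.1 p.2 : ℚ) ≤ B := h p.1 p.2
        _ ≤ B * (wdist (Gn n).edgeSet (c2G n) p.1 p.2 : ℚ) := by
            apply le_mul_of_one_le_right hB
            exact_mod_cast h1
  · exact hB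

lemma key_sum (T : Finset (Sym2 (Vtx n))) :
    (∑ i ∈ Finset.univ.filter (fun i : Fin n => DirE n i ∈ T), ((2:ℚ)^((i:ℕ)+1)))
      + ∑ k ∈ Finset.range n, (crossN T k : ℚ) = ∑ k ∈ Finset.range n, (2:ℚ)^(k+2) := by
  classical
  rw [Finset.sum_filter]
  have h2 : ∑ k ∈ Finset.range n, (crossN T k : ℚ)
      = ∑ i : Fin n, (crossN T (i:ℕ) : ℚ) :=
    (Fin.sum_univ_eq_sum_range (fun k => (crossN T k : ℚ)) n).symm
  have h3 : ∑ k ∈ Finset.range n, (2:ℚ)^(k+2) = ∑ i : Fin n, (2:ℚ)^((i:ℕ)+2) :=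
    (Fin.sum_univ_eq_sum_range (fun k => (2:ℚ)^(k+2)) n).symm
  rw [h2, h3, ← Finset.sum_add_distrib]
  apply Finset.sum_congr rfl
  intro i _
  by_cases hd : DirE n i ∈ T
  · rw [if_pos hd, cross_of_mem' hd]; push_cast; ring
  · rw [if_neg hd, cross_of_not_mem hd]; push_cast; ring

end Final
/-- For `n ≥ 2`, no spanner of `G_n` outside `X` has a value vector
dominating the value vector of a spanner in `X`. -/
theorem not_dominated_by_outside_X (n : ℕ) (hn : 2 ≤ n) (S Shat : Finset (Sym2 (Vtx n)))
    (hS : memX n (by omega) S) (hShat : IsSpanner (Gn n) (↑Shat))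
    (hnotX : ¬ memX n (by omega) Shat) :
    ¬ Dominates (valueVec (Gn n) (c1G n) (c2G n) Shat) (valueVec (Gn n) (c1G n) (c2G n) S) := by
  rintro ⟨hle, hne⟩
  obtain ⟨h1, h2⟩ := Prod.le_def.mp hle
  have hle1 : ((f1 (c1G n) Shat : ℤ) : ℚ) ≤ ((f1 (c1G n) S : ℤ) : ℚ) := h1
  have hle2 : f2 (Gn n).edgeSet (↑Shat) (c2G n) ≤ f2 (Gn n).edgeSet (↑S) (c2G n) := h2
  set i0 : Fin n := ⟨0, by omega⟩ with hi0
  set j0 : Fin n := ⟨n-1, by omega⟩ with hj0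
  have hSsub : (↑S : Set (Sym2 (Vtx n))) ⊆ EG n := fun e he =>
    edgeSet_subset_EG (hS.1.1 he)
  have hHsub : (↑Shat : Set (Sym2 (Vtx n))) ⊆ EG n := fun e he =>
    edgeSet_subset_EG (hShat.1 he)
  have hstS : s(((i0, 0) : Vtx n), ((j0, 2) : Vtx n)) ∉ S := hS.2.2
  have hzS : HZ n S := hS.2.1
  -- f1 of S
  have hf1S : f1 (c1G n) S =
      ∑ i ∈ Finset.univ.filter (fun i : Fin n => DirE n i ∈ S), (2^((i:ℕ)+1) : ℤ) :=
    f1_eq hn S hSsub hstS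
  by_cases hstin : s(((i0, 0) : Vtx n), ((j0, 2) : Vtx n)) ∈ Shat
  · -- the shortcut edge is in Shat: f1 too large
    have hbig : (2:ℤ)^(n+1) ≤ f1 (c1G n) Shat := by
      have h := Finset.single_le_sum (f := fun e => c1G n e)
        (fun e _ => c1_nonneg n e) hstin
      rw [c1_st n hn i0 j0 rfl rfl] at h
      exact h
    have hsmall : f1 (c1G n) S ≤ 2^(n+1) - 2 := by
      rw [hf1S]
      calc ∑ i ∈ Finset.univ.filter (fun i : Fin n => DirE n i ∈ S), (2^((i:ℕ)+1) : ℤ)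
          ≤ ∑ i : Fin n, (2^((i:ℕ)+1) : ℤ) :=
            Finset.sum_le_sum_of_subset_of_nonneg (Finset.filter_subset _ _)
              (fun i _ _ => by positivity)
        _ = ∑ k ∈ Finset.range n, (2:ℤ)^(k+1) :=
            Fin.sum_univ_eq_sum_range (fun k => (2:ℤ)^(k+1)) n
        _ = 2^(n+1) - 2 := geom_sum_int n
    have : (2:ℤ)^(n+1) ≤ 2^(n+1) - 2 := by
      have := hle1
      exact_mod_cast le_trans hbig (le_trans (by exact_mod_cast hle1) hsmall)
    omega
  · -- the shortcut edge is not in Shat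
    have hf1H : f1 (c1G n) Shat =
        ∑ i ∈ Finset.univ.filter (fun i : Fin n => DirE n i ∈ Shat), (2^((i:ℕ)+1) : ℤ) :=
      f1_eq hn Shat hHsub hstin
    -- lower bound for f2 of Shat
    have hdlb : ∑ k ∈ Finset.range n, crossN Shat k + (n-1) ≤
        wdist (↑Shat) (c2G n) ((i0, 0) : Vtx n) ((j0, 2) : Vtx n) :=
      wdist_st_lb hn hHsub hstin hShat.2 i0 j0 rfl rfl
    have hf2H : ((∑ k ∈ Finset.range n, crossN Shat k + (n-1) : ℕ) : ℚ) ≤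
        f2 (Gn n).edgeSet (↑Shat) (c2G n) :=
      le_trans (by exact_mod_cast hdlb) (f2_ge hn Shat i0 j0 rfl rfl)
    -- upper bound for f2 of S
    have hf2S : f2 (Gn n).edgeSet (↑S) (c2G n) ≤
        ((∑ k ∈ Finset.range n, crossN S k + (n-1) : ℕ) : ℚ) :=
      f2_le_all S _ (by positivity) (fun u v => by exact_mod_cast wdist_le_Dst hn hzS u v)
    -- the two key sum identities
    have hkH := key_sum (n := n) Shat
    have hkS := key_sum (n := n) S
    -- translate f1 into rationals
    have hf1HQ : ((f1 (c1G n) Shat : ℤ) : ℚ) =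
        ∑ i ∈ Finset.univ.filter (fun i : Fin n => DirE n i ∈ Shat), ((2:ℚ)^((i:ℕ)+1)) := by
      rw [hf1H]; push_cast; ring
    have hf1SQ : ((f1 (c1G n) S : ℤ) : ℚ) =
        ∑ i ∈ Finset.univ.filter (fun i : Fin n => DirE n i ∈ S), ((2:ℚ)^((i:ℕ)+1)) := by
      rw [hf1S]; push_cast; ring
    have hcastH : ((∑ k ∈ Finset.range n, crossN Shat k + (n-1) : ℕ) : ℚ)
        = ∑ k ∈ Finset.range n, (crossN Shat k : ℚ) + ((n-1 : ℕ) : ℚ) := by push_cast; ring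
    have hcastS : ((∑ k ∈ Finset.range n, crossN S k + (n-1) : ℕ) : ℚ)
        = ∑ k ∈ Finset.range n, (crossN S k : ℚ) + ((n-1 : ℕ) : ℚ) := by push_cast; ring
    rw [hcastH] at hf2H
    rw [hcastS] at hf2S
    -- equality of the two value vectors, contradiction
    have hf1eq : ((f1 (c1G n) Shat : ℤ) : ℚ) = ((f1 (c1G n) S : ℤ) : ℚ) := by
      rw [hf1HQ, hf1SQ] at hle1 ⊢
      linarith
    have hf2eq : f2 (Gn n).edgeSet (↑Shat) (c2G n) = f2 (Gn n).edgeSet (↑S) (c2G n) := by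
      rw [hf1HQ, hf1SQ] at hle1
      linarith
    exact hne (Prod.ext hf1eq hf2eq)
end MSpPaper
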